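/- arXiv:1706.05796 — 2 statements merged into one kernel-verified Lean document; each statement's English description precedes it below -/
import Mathlib

section
/- Existence of an inhibitory steady state under the learning rule (Proposition 6.2, existence part): assume σ : [0,∞) → [0,∞) is of class C² with σ' ≥ 0, let I : ℝ → ℝ be bounded measurable, and let K : (−∞,0) → ℝ be continuous with K(w) < 0 and K_m ≤ |K(w)| ≤ K_M for all w < 0 (0 < K_m ≤ K_M). For N̄ ≥ 0 let φ(N̄) ≥ 0 be the unique number with N̄² = ∫_{−φ(N̄)}^{0} (w/K(w)) dw, and define Φ(N̄) = ∫_{−φ(N̄)}^{0} (w/K(w)) · Z_{N̄,I}(w) dw. Then there exists N̄ > 0 such that Φ(N̄) = a N̄. -/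
open MeasureTheory Real Set Filter

/-- The partition function `Z_{N̄,I}(w)` of the stationary LIF problem. -/
noncomputable def Zfun (a VR VF : ℝ) (I σ : ℝ → ℝ) (w N : ℝ) : ℝ :=
  ∫ v in Set.Iic VF, ∫ v' in Set.Icc (max VR v) VF,
    Real.exp ((v' - v) * (v' + v - 2 * I w - 2 * w * σ N) / (2 * a))

noncomputable def ee (a b v v' : ℝ) : ℝ := Real.exp ((v' - v) * (v' + v - b) / (2 * a))

noncomputable def inn (a VR VF b v : ℝ) : ℝ := ∫ v' in Set.Icc (max VR v) VF, ee a b v v'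

noncomputable def gg (a VR VF b : ℝ) : ℝ := ∫ v in Set.Iic VF, inn a VR VF b v

lemma ee_cont (a : ℝ) :
    Continuous (Function.uncurry (fun (p : ℝ × ℝ) (t : ℝ) => ee a p.1 p.2 t)) := by
  unfold Function.uncurry ee
  fun_prop

lemma innC (a VR VF : ℝ) :
    Continuous (fun p : ℝ × ℝ => ∫ t in (max VR p.2)..VF, ee a p.1 p.2 t) := by
  have h := intervalIntegral.continuous_parametric_intervalIntegral_of_continuous
    (μ := volume) (a₀ := VF) (f := fun (p : ℝ × ℝ) (t : ℝ) => ee a p.1 p.2 t)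
    (ee_cont a) (s := fun p : ℝ × ℝ => max VR p.2) (by fun_prop)
  have heq : (fun p : ℝ × ℝ => ∫ t in (max VR p.2)..VF, ee a p.1 p.2 t)
      = fun p : ℝ × ℝ => -∫ t in VF..(max VR p.2), ee a p.1 p.2 t := by
    funext p; rw [intervalIntegral.integral_symm]
  rw [heq]
  exact h.neg

lemma inn_eq {a VR VF v : ℝ} (hV : VR ≤ VF) (hv : v ≤ VF) (b : ℝ) :
    inn a VR VF b v = ∫ t in (max VR v)..VF, ee a b v t := by
  rw [inn, intervalIntegral.integral_of_le (max_le hV hv),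
    MeasureTheory.integral_Icc_eq_integral_Ioc]

lemma inn_nonneg (a VR VF b v : ℝ) : 0 ≤ inn a VR VF b v :=
  setIntegral_nonneg measurableSet_Icc (fun _ _ => (Real.exp_pos _).le)

noncomputable def dom (a VR VF R v : ℝ) : ℝ :=
  (VF - VR) * (Real.exp (((|VR| + |VF|) ^ 2 + R * (|VR| + |VF|) + R ^ 2) / (2 * a))
    * Real.exp (-(3 / (8 * a)) * v ^ 2))

lemma ee_le {a VR VF R b v v' : ℝ} (ha : 0 < a) (hb : |b| ≤ R)
    (hv' : v' ∈ Set.Icc (max VR v) VF) :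
    ee a b v v' ≤ Real.exp (((|VR| + |VF|) ^ 2 + R * (|VR| + |VF|) + R ^ 2) / (2 * a))
      * Real.exp (-(3 / (8 * a)) * v ^ 2) := by
  have hR : 0 ≤ R := (abs_nonneg b).trans hb
  rw [← Real.exp_add, ee, Real.exp_le_exp]
  set MV := |VR| + |VF| with hMV
  clear_value MV
  have hv'a : |v'| ≤ MV := by
    rw [abs_le]
    constructor
    · nlinarith [hv'.1, le_max_left VR v, abs_nonneg VF, neg_abs_le VR, hv'.2, le_abs_self VF]
    · nlinarith [hv'.2, le_abs_self VF, abs_nonneg VR]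
  have h2 : v' ^ 2 ≤ MV ^ 2 := by nlinarith [abs_nonneg v', sq_abs v']
  have h3 : -(b * v') ≤ R * MV := by
    calc -(b * v') ≤ |b * v'| := neg_le_abs _
    _ = |b| * |v'| := abs_mul _ _
    _ ≤ R * MV := mul_le_mul hb hv'a (abs_nonneg _) hR
  have h4 : b * v ≤ R ^ 2 + v ^ 2 / 4 := by
    calc b * v ≤ |b * v| := le_abs_self _
    _ = |b| * |v| := abs_mul _ _
    _ ≤ R * |v| := mul_le_mul_of_nonneg_right hb (abs_nonneg v)
    _ ≤ R ^ 2 + v ^ 2 / 4 := by nlinarith [sq_nonneg (R - |v| / 2), sq_abs v]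
  have hexp : (v' - v) * (v' + v - b) = v' ^ 2 - b * v' - v ^ 2 + b * v := by ring
  have hX : (v' - v) * (v' + v - b) ≤ (MV ^ 2 + R * MV + R ^ 2) - 3 / 4 * v ^ 2 := by
    rw [hexp]; linarith
  have hco : (MV ^ 2 + R * MV + R ^ 2) / (2 * a) + -(3 / (8 * a)) * v ^ 2
      = ((MV ^ 2 + R * MV + R ^ 2) - 3 / 4 * v ^ 2) / (2 * a) := by
    field_simp; ring
  rw [hco]
  gcongr

lemma inn_le_dom {a VR VF R b v : ℝ} (ha : 0 < a) (hV : VR < VF) (hb : |b| ≤ R)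
    (hv : v ≤ VF) : inn a VR VF b v ≤ dom a VR VF R v := by
  set C := Real.exp (((|VR| + |VF|) ^ 2 + R * (|VR| + |VF|) + R ^ 2) / (2 * a))
    * Real.exp (-(3 / (8 * a)) * v ^ 2) with hC
  have hC0 : 0 ≤ C := by positivity
  have h1 : inn a VR VF b v ≤ ∫ _ in Set.Icc (max VR v) VF, C := by
    apply setIntegral_mono_on
    · exact (Continuous.integrableOn_Icc (by unfold ee; fun_prop))
    · exact integrableOn_const measure_Icc_lt_top.ne
    · exact measurableSet_Icc
    · exact fun x hx => ee_le ha hb hx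
  calc inn a VR VF b v ≤ ∫ _ in Set.Icc (max VR v) VF, C := h1
  _ = (volume (Set.Icc (max VR v) VF)).toReal * C := by
      rw [setIntegral_const]; rfl
  _ ≤ (VF - VR) * C := by
      apply mul_le_mul_of_nonneg_right _ hC0
      rw [Real.volume_Icc, ENNReal.toReal_ofReal (by simp [hv, hV.le] : 0 ≤ VF - max VR v)]
      linarith [le_max_left VR v]
  _ = dom a VR VF R v := by rw [dom]

lemma dom_integrable {a VR VF R : ℝ} (ha : 0 < a) :
    MeasureTheory.Integrable (dom a VR VF R) := by
  unfold dom
  have h : MeasureTheory.Integrable (fun v : ℝ => Real.exp (-(3 / (8 * a)) * v ^ 2)) :=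
    integrable_exp_neg_mul_sq (by positivity)
  simpa [mul_assoc] using (h.const_mul _).const_mul _

set_option maxHeartbeats 1000000 in
lemma inn_asm {a VR VF : ℝ} (hV : VR < VF) (b : ℝ) :
    AEStronglyMeasurable (inn a VR VF b) (volume.restrict (Set.Iic VF)) := by
  have hc : Continuous (fun v => ∫ t in (max VR v)..VF, ee a b v t) :=
    (innC a VR VF).comp₂ continuous_const continuous_id
  apply hc.aestronglyMeasurable.congr
  filter_upwards [ae_restrict_mem measurableSet_Iic] with v hv
  exact (inn_eq hV.le hv b).symm

lemma inn_integrableOn {a VR VF : ℝ} (ha : 0 < a) (hV : VR < VF) (b : ℝ) :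
    IntegrableOn (inn a VR VF b) (Set.Iic VF) := by
  apply Integrable.mono' ((dom_integrable (a := a) (VR := VR) (VF := VF) (R := |b|) ha).restrict)
    (inn_asm hV b)
  filter_upwards [ae_restrict_mem measurableSet_Iic] with v hv
  rw [Real.norm_eq_abs, abs_of_nonneg (inn_nonneg a VR VF b v)]
  exact inn_le_dom ha hV le_rfl hv

lemma gg_antitone {a VR VF : ℝ} (ha : 0 < a) (hV : VR < VF) : Antitone (gg a VR VF) := by
  intro b b' hbb
  apply integral_mono_ae (inn_integrableOn ha hV b') (inn_integrableOn ha hV b)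
  filter_upwards [ae_restrict_mem measurableSet_Iic] with v hv
  apply setIntegral_mono_on
  · exact (Continuous.integrableOn_Icc (by unfold ee; fun_prop))
  · exact (Continuous.integrableOn_Icc (by unfold ee; fun_prop))
  · exact measurableSet_Icc
  · intro x hx
    unfold ee
    apply Real.exp_le_exp.mpr
    apply div_le_div_of_nonneg_right _ (by positivity)
    have hvx : v ≤ x := le_trans (le_max_right VR v) hx.1
    have : x + v - b' ≤ x + v - b := by linarith
    exact mul_le_mul_of_nonneg_left this (by linarith)

lemma gg_pos {a VR VF : ℝ} (ha : 0 < a) (hV : VR < VF) (b : ℝ) : 0 < gg a VR VF b := by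
  have hpos : ∀ v < VF, 0 < inn a VR VF b v := by
    intro v hv
    rw [inn]
    apply (setIntegral_pos_iff_support_of_nonneg_ae _ _).mpr
    · have hsupp : Function.support (fun v' => ee a b v v') = Set.univ := by
        ext x; simp [ee, Real.exp_ne_zero]
      rw [hsupp, Set.univ_inter, Real.volume_Icc]
      have : max VR v < VF := max_lt hV hv
      simp only [ENNReal.ofReal_pos]
      linarith
    · exact Eventually.of_forall (fun x => (Real.exp_pos _).le)
    · exact (Continuous.integrableOn_Icc (by unfold ee; fun_prop))
  rw [gg]
  apply (setIntegral_pos_iff_support_of_nonneg_ae _ _).mpr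
  · apply lt_of_lt_of_le _ (measure_mono (_ : Set.Iio VF ⊆ _))
    · rw [Real.volume_Iio]; exact ENNReal.zero_lt_top
    · intro v hv
      exact ⟨ne_of_gt (hpos v hv), Set.mem_Iic.mpr hv.le⟩
  · exact Eventually.of_forall (fun v => inn_nonneg a VR VF b v)
  · exact inn_integrableOn ha hV b

set_option maxHeartbeats 1000000 in
lemma gg_cont {a VR VF : ℝ} (ha : 0 < a) (hV : VR < VF) : Continuous (gg a VR VF) := by
  rw [continuous_iff_continuousAt]
  intro b₀
  apply continuousAt_of_dominated (bound := dom a VR VF (|b₀| + 1))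
  · exact Eventually.of_forall (fun b => inn_asm hV b)
  · have hev : ∀ᶠ b in nhds b₀, |b| ≤ |b₀| + 1 := by
      have : Continuous (fun b : ℝ => |b|) := continuous_abs
      have h := (this.tendsto b₀).eventually_le_const (by linarith : |b₀| < |b₀| + 1)
      exact h
    filter_upwards [hev] with b hb
    filter_upwards [ae_restrict_mem measurableSet_Iic] with v hv
    rw [Real.norm_eq_abs, abs_of_nonneg (inn_nonneg a VR VF b v)]
    exact inn_le_dom ha hV hb hv
  · exact (dom_integrable ha).restrict
  · filter_upwards [ae_restrict_mem measurableSet_Iic] with v hv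
    have hc : Continuous (fun b => ∫ t in (max VR v)..VF, ee a b v t) :=
      (innC a VR VF).comp₂ continuous_id continuous_const
    have heq : (fun b => inn a VR VF b v) = fun b => ∫ t in (max VR v)..VF, ee a b v t :=
      funext fun b => inn_eq hV.le hv b
    rw [heq]
    exact hc.continuousAt

lemma Zfun_eq (a VR VF : ℝ) (I σ : ℝ → ℝ) (w N : ℝ) :
    Zfun a VR VF I σ w N = gg a VR VF (2 * I w + 2 * w * σ N) := by
  unfold Zfun gg inn ee
  simp only [sub_sub]

section Kside
variable {K : ℝ → ℝ} {Km KM : ℝ}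

lemma q_asm (hKcont : ContinuousOn K (Set.Iio 0)) {c d : ℝ} (hd : d ≤ 0) :
    AEStronglyMeasurable (fun w => w / K w) (volume.restrict (Set.Ioc c d)) := by
  have h1 : volume.restrict (Set.Ioc c d) = volume.restrict (Set.Ioo c d) :=
    (Measure.restrict_congr_set Ioo_ae_eq_Ioc).symm
  rw [h1]
  have hK : AEMeasurable K (volume.restrict (Set.Iio 0)) :=
    hKcont.aemeasurable measurableSet_Iio
  have h2 : AEMeasurable (fun w => w / K w) (volume.restrict (Set.Iio 0)) :=
    aemeasurable_id.div hK
  have hsub : Set.Ioo c d ⊆ Set.Iio 0 := fun x hx => lt_of_lt_of_le hx.2 hd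
  exact (h2.mono_measure (Measure.restrict_mono hsub le_rfl)).aestronglyMeasurable

lemma q_int (hKcont : ContinuousOn K (Set.Iio 0)) (hKm : 0 < Km)
    (hKbd : ∀ w : ℝ, w < 0 → Km ≤ |K w| ∧ |K w| ≤ KM)
    {c d : ℝ} (hd : d ≤ 0) :
    IntegrableOn (fun w => w / K w) (Set.Ioc c d) := by
  apply Integrable.mono' (g := fun _ => |c| / Km)
    (integrableOn_const measure_Ioc_lt_top.ne) (q_asm hKcont hd)
  have h1 : volume.restrict (Set.Ioc c d) = volume.restrict (Set.Ioo c d) :=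
    (Measure.restrict_congr_set Ioo_ae_eq_Ioc).symm
  rw [h1]
  filter_upwards [ae_restrict_mem measurableSet_Ioo] with w hw
  have hw0 : w < 0 := lt_of_lt_of_le hw.2 hd
  rw [Real.norm_eq_abs, abs_div]
  apply div_le_div₀ (abs_nonneg c) _ hKm (hKbd w hw0).1
  rw [abs_of_neg hw0]
  calc -w ≤ -c := by linarith [hw.1]
  _ ≤ |c| := neg_le_abs c

lemma G_upper (hKcont : ContinuousOn K (Set.Iio 0)) (hKm : 0 < Km)
    (hKneg : ∀ w : ℝ, w < 0 → K w < 0)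
    (hKbd : ∀ w : ℝ, w < 0 → Km ≤ |K w| ∧ |K w| ≤ KM)
    {t : ℝ} (ht : 0 ≤ t) :
    (∫ w in Set.Ioc (-t) 0, w / K w) ≤ t ^ 2 / (2 * Km) := by
  have h1 : (∫ w in Set.Ioc (-t) 0, w / K w) ≤ ∫ w in Set.Ioc (-t) 0, -w / Km := by
    apply setIntegral_mono_on (q_int hKcont hKm hKbd le_rfl)
      ((by fun_prop : Continuous fun w : ℝ => -w / Km).integrableOn_Ioc) measurableSet_Ioc
    intro w hw
    rcases lt_or_eq_of_le hw.2 with hw0 | hw0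
    · have hK := hKneg w hw0
      have hKb := (hKbd w hw0).1
      rw [abs_of_neg hK] at hKb
      rw [show w / K w = -w / -K w by rw [neg_div_neg_eq]]
      gcongr
      linarith
    · rw [hw0]; simp
  have h2 : (∫ w in Set.Ioc (-t) 0, -w / Km) = t ^ 2 / (2 * Km) := by
    rw [← intervalIntegral.integral_of_le (by linarith : -t ≤ (0 : ℝ))]
    rw [intervalIntegral.integral_div]
    rw [intervalIntegral.integral_neg, integral_id]
    ring
  linarith

lemma G_diff_lower (hKcont : ContinuousOn K (Set.Iio 0)) (hKm : 0 < Km) (hKmM : Km ≤ KM)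
    (hKneg : ∀ w : ℝ, w < 0 → K w < 0)
    (hKbd : ∀ w : ℝ, w < 0 → Km ≤ |K w| ∧ |K w| ≤ KM)
    {s t : ℝ} (hs : 0 ≤ s) (hst : s ≤ t) :
    s * (t - s) / KM ≤ ∫ w in Set.Ioc (-t) (-s), w / K w := by
  have hKM : 0 < KM := lt_of_lt_of_le hKm hKmM
  have h1 : (∫ _ in Set.Ioc (-t) (-s), s / KM) ≤ ∫ w in Set.Ioc (-t) (-s), w / K w := by
    apply setIntegral_mono_on (integrableOn_const measure_Ioc_lt_top.ne)
      (q_int hKcont hKm hKbd (by linarith)) measurableSet_Ioc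
    intro w hw
    rcases lt_or_eq_of_le (le_trans hw.2 (by linarith : -s ≤ 0)) with hw0 | hw0
    · have hK := hKneg w hw0
      have hKb := (hKbd w hw0).2
      rw [abs_of_neg hK] at hKb
      rw [show w / K w = -w / -K w by rw [neg_div_neg_eq]]
      apply div_le_div₀ (by linarith) (by linarith [hw.2]) (by linarith) hKb
    · have hs0 : s = 0 := by
        have := hw.2; rw [hw0] at this; linarith
      rw [hw0, hs0]; simp
  have h2 : (∫ _ in Set.Ioc (-t) (-s), s / KM) = s * (t - s) / KM := by
    rw [setIntegral_const, Real.volume_real_Ioc_of_le (by linarith : -t ≤ -s), smul_eq_mul]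
    ring
  linarith

lemma G_split (hKcont : ContinuousOn K (Set.Iio 0)) (hKm : 0 < Km)
    (hKbd : ∀ w : ℝ, w < 0 → Km ≤ |K w| ∧ |K w| ≤ KM)
    {s t : ℝ} (hs : 0 ≤ s) (hst : s ≤ t) :
    (∫ w in Set.Ioc (-t) 0, w / K w)
      = (∫ w in Set.Ioc (-t) (-s), w / K w) + ∫ w in Set.Ioc (-s) 0, w / K w := by
  rw [← Set.Ioc_union_Ioc_eq_Ioc (by linarith : -t ≤ -s) (by linarith : -s ≤ (0:ℝ))]
  exact setIntegral_union (Set.Ioc_disjoint_Ioc_of_le le_rfl) measurableSet_Ioc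
    (q_int hKcont hKm hKbd (by linarith)) (q_int hKcont hKm hKbd le_rfl)

end Kside

set_option maxHeartbeats 2000000 in
/-- Existence of an inhibitory steady state under the learning rule
(Proposition 6.2, existence part): there is `N̄ > 0` with
`Φ(N̄) = ∫_{−φ(N̄)}^0 (w/K(w)) Z_{N̄,I}(w) dw = a N̄`. -/
theorem stmt18 (a VR VF : ℝ) (ha : 0 < a) (hV : VR < VF)
    (σ : ℝ → ℝ) (hσC2 : ContDiff ℝ 2 σ) (hσ0 : ∀ N, 0 ≤ N → 0 ≤ σ N)
    (hσ' : ∀ N, 0 ≤ N → 0 ≤ deriv σ N)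
    (I : ℝ → ℝ) (hImeas : Measurable I) (nI : ℝ) (hI : ∀ x, |I x| ≤ nI)
    (K : ℝ → ℝ) (hKcont : ContinuousOn K (Set.Iio 0))
    (hKneg : ∀ w : ℝ, w < 0 → K w < 0)
    (Km KM : ℝ) (hKm : 0 < Km) (hKmM : Km ≤ KM)
    (hKbd : ∀ w : ℝ, w < 0 → Km ≤ |K w| ∧ |K w| ≤ KM)
    (φ : ℝ → ℝ)
    (hφ : ∀ N : ℝ, 0 ≤ N →
      0 ≤ φ N ∧ N ^ 2 = ∫ w in Set.Ioc (-φ N) (0 : ℝ), w / K w) :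
    ∃ N > 0,
      (∫ w in Set.Ioc (-φ N) (0 : ℝ), (w / K w) * Zfun a VR VF I σ w N) = a * N := by
  have hKM : 0 < KM := lt_of_lt_of_le hKm hKmM
  have hnI : 0 ≤ nI := le_trans (abs_nonneg _) (hI 0)
  have hσcont : Continuous σ := hσC2.continuous
  have hσmono : MonotoneOn σ (Set.Ici 0) := by
    apply monotoneOn_of_deriv_nonneg (convex_Ici 0) hσcont.continuousOn
    · exact (hσC2.differentiable (by norm_num)).differentiableOn
    · rw [interior_Ici]; exact fun x hx => hσ' x (le_of_lt hx)
  have hφ0 : ∀ N, 0 ≤ N → 0 ≤ φ N := fun N hN => (hφ N hN).1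
  have hG : ∀ N, 0 ≤ N → N ^ 2 = ∫ w in Set.Ioc (-φ N) (0:ℝ), w / K w :=
    fun N hN => (hφ N hN).2
  -- lower bound on φ
  have hφ_lb : ∀ N, 0 ≤ N → Real.sqrt (2 * Km) * N ≤ φ N := by
    intro N hN
    have h1 : N ^ 2 ≤ (φ N) ^ 2 / (2 * Km) :=
      (hG N hN) ▸ G_upper hKcont hKm hKneg hKbd (hφ0 N hN)
    have h2 : 2 * Km * N ^ 2 ≤ (φ N) ^ 2 := by
      rw [le_div_iff₀ (by positivity)] at h1; linarith
    calc Real.sqrt (2 * Km) * N = Real.sqrt (2 * Km) * Real.sqrt (N ^ 2) := by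
          rw [Real.sqrt_sq hN]
    _ = Real.sqrt (2 * Km * N ^ 2) := (Real.sqrt_mul (by positivity) _).symm
    _ ≤ Real.sqrt ((φ N) ^ 2) := Real.sqrt_le_sqrt h2
    _ = φ N := Real.sqrt_sq (hφ0 N hN)
  -- monotonicity of φ
  have hφmono : ∀ N N', 0 ≤ N → N ≤ N' → 0 < N' → φ N ≤ φ N' := by
    intro N N' hN hNN hN'
    by_contra hc
    push_neg at hc
    have hN'0 : (0:ℝ) ≤ N' := hN'.le
    have hsq : 0 < Real.sqrt (2 * Km) := Real.sqrt_pos.mpr (by positivity)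
    have hp' : 0 < φ N' := lt_of_lt_of_le (by positivity) (hφ_lb N' hN'0)
    have hsplit := G_split hKcont hKm hKbd (hφ0 N' hN'0) hc.le
    have hlow := G_diff_lower hKcont hKm hKmM hKneg hKbd (hφ0 N' hN'0) hc.le
    have e1 := hG N hN
    have e2 := hG N' hN'0
    have hposn : 0 < φ N' * (φ N - φ N') / KM := by
      apply div_pos _ hKM
      exact mul_pos hp' (by linarith)
    have hNN2 : N ^ 2 ≤ N' ^ 2 := by nlinarith
    rw [e1, e2] at hNN2
    rw [hsplit] at hNN2
    linarith
  -- Z facts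
  have hZeq : ∀ w N, Zfun a VR VF I σ w N = gg a VR VF (2 * I w + 2 * w * σ N) :=
    fun w N => Zfun_eq a VR VF I σ w N
  have hZ_lb : ∀ w N, w ≤ 0 → 0 ≤ N →
      gg a VR VF (2 * nI) ≤ Zfun a VR VF I σ w N := by
    intro w N hw hN
    rw [hZeq]
    apply gg_antitone ha hV
    have h1 : I w ≤ nI := (abs_le.mp (hI w)).2
    have h2 : w * σ N ≤ 0 := mul_nonpos_of_nonpos_of_nonneg hw (hσ0 N hN)
    linarith
  have hZ_ub : ∀ w N P S, -P ≤ w → w ≤ 0 → σ N ≤ S → 0 ≤ σ N → 0 ≤ P →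
      Zfun a VR VF I σ w N ≤ gg a VR VF (-(2 * nI) - 2 * P * S) := by
    intro w N P S hPw hw hS hσN hP
    rw [hZeq]
    apply gg_antitone ha hV
    have h1 : -nI ≤ I w := (abs_le.mp (hI w)).1
    have h2 : -(P * S) ≤ w * σ N := by nlinarith
    linarith
  have hZ_nonneg : ∀ w N, 0 ≤ Zfun a VR VF I σ w N := by
    intro w N; rw [hZeq]; exact (gg_pos ha hV _).le
  have hZmeas : ∀ N, Measurable (fun w => Zfun a VR VF I σ w N) := by
    intro N
    have heq : (fun w => Zfun a VR VF I σ w N)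
        = (gg a VR VF) ∘ (fun w => 2 * I w + 2 * w * σ N) := funext fun w => hZeq w N
    rw [heq]
    have hm : Measurable (fun w => 2 * I w + 2 * w * σ N) := by
      apply Measurable.add (hImeas.const_mul 2)
      exact (measurable_id.const_mul 2).mul_const (σ N)
    exact (gg_cont ha hV).measurable.comp hm
  have hZcontN : ∀ w, Continuous (fun N => Zfun a VR VF I σ w N) := by
    intro w
    have heq : (fun N => Zfun a VR VF I σ w N)
        = (gg a VR VF) ∘ (fun N => 2 * I w + 2 * w * σ N) := funext fun N => hZeq w N
    rw [heq]
    exact (gg_cont ha hV).comp (by fun_prop)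
  -- integrability of the integrand
  have hInt : ∀ N B, 0 ≤ N → 0 ≤ B → IntegrableOn
      (fun w => (w / K w) * Zfun a VR VF I σ w N) (Set.Ioc (-B) 0) := by
    intro N B hN hB
    apply Integrable.mono'
      (g := fun _ => (B / Km) * gg a VR VF (-(2 * nI) - 2 * B * σ N))
      (integrableOn_const measure_Ioc_lt_top.ne)
      ((q_asm hKcont le_rfl).mul (hZmeas N).aestronglyMeasurable)
    have h1 : volume.restrict (Set.Ioc (-B) (0:ℝ)) = volume.restrict (Set.Ioo (-B) 0) :=
      (Measure.restrict_congr_set Ioo_ae_eq_Ioc).symm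
    rw [h1]
    filter_upwards [ae_restrict_mem measurableSet_Ioo] with w hw
    simp only [Pi.mul_apply]
    rw [Real.norm_eq_abs, abs_mul]
    apply mul_le_mul
    · rw [abs_div]
      apply div_le_div₀ (by positivity) _ hKm (hKbd w hw.2).1
      rw [abs_of_neg hw.2]; linarith [hw.1]
    · rw [abs_of_nonneg (hZ_nonneg w N)]
      exact hZ_ub w N B (σ N) hw.1.le hw.2.le le_rfl (hσ0 N hN) hB
    · exact abs_nonneg _
    · positivity
  -- lower bound for Φ
  have hΦ_lb : ∀ N, 0 ≤ N → gg a VR VF (2 * nI) * N ^ 2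
      ≤ ∫ w in Set.Ioc (-φ N) (0:ℝ), (w / K w) * Zfun a VR VF I σ w N := by
    intro N hN
    have h1 : (∫ w in Set.Ioc (-φ N) (0:ℝ), gg a VR VF (2 * nI) * (w / K w))
        ≤ ∫ w in Set.Ioc (-φ N) (0:ℝ), (w / K w) * Zfun a VR VF I σ w N := by
      apply setIntegral_mono_on
        ((q_int hKcont hKm hKbd le_rfl).const_mul _)
        (hInt N (φ N) hN (hφ0 N hN)) measurableSet_Ioc
      intro w hw
      rcases lt_or_eq_of_le hw.2 with hw0 | hw0
      · have hq0 : 0 ≤ w / K w := by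
          rw [show w / K w = -w / -K w by rw [neg_div_neg_eq]]
          apply div_nonneg (by linarith) (by linarith [hKneg w hw0])
        rw [mul_comm]
        exact mul_le_mul_of_nonneg_left (hZ_lb w N hw0.le hN) hq0
      · rw [hw0]; simp
    have h2 : (∫ w in Set.Ioc (-φ N) (0:ℝ), gg a VR VF (2 * nI) * (w / K w))
        = gg a VR VF (2 * nI) * N ^ 2 := by
      rw [integral_const_mul, ← hG N hN]
    linarith
  -- upper bound for Φ for N ≤ 1
  have hΦ_ub : ∀ N, 0 ≤ N → N ≤ 1 →
      (∫ w in Set.Ioc (-φ N) (0:ℝ), (w / K w) * Zfun a VR VF I σ w N)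
        ≤ gg a VR VF (-(2 * nI) - 2 * φ 1 * σ 1) * N ^ 2 := by
    intro N hN hN1
    have hφN1 : φ N ≤ φ 1 := hφmono N 1 hN hN1 one_pos
    have hσN1 : σ N ≤ σ 1 := hσmono (Set.mem_Ici.mpr hN) (Set.mem_Ici.mpr zero_le_one) hN1
    have h1 : (∫ w in Set.Ioc (-φ N) (0:ℝ), (w / K w) * Zfun a VR VF I σ w N)
        ≤ ∫ w in Set.Ioc (-φ N) (0:ℝ),
            gg a VR VF (-(2 * nI) - 2 * φ 1 * σ 1) * (w / K w) := by
      apply setIntegral_mono_on (hInt N (φ N) hN (hφ0 N hN))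
        ((q_int hKcont hKm hKbd le_rfl).const_mul _) measurableSet_Ioc
      intro w hw
      rcases lt_or_eq_of_le hw.2 with hw0 | hw0
      · have hq0 : 0 ≤ w / K w := by
          rw [show w / K w = -w / -K w by rw [neg_div_neg_eq]]
          apply div_nonneg (by linarith) (by linarith [hKneg w hw0])
        have hZub := hZ_ub w N (φ 1) (σ 1) (by linarith [hw.1]) hw0.le hσN1
          (hσ0 N hN) (hφ0 1 zero_le_one)
        calc (w / K w) * Zfun a VR VF I σ w N
            ≤ (w / K w) * gg a VR VF (-(2 * nI) - 2 * φ 1 * σ 1) :=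
              mul_le_mul_of_nonneg_left hZub hq0
        _ = gg a VR VF (-(2 * nI) - 2 * φ 1 * σ 1) * (w / K w) := mul_comm _ _
      · rw [hw0]; simp
    have h2 : (∫ w in Set.Ioc (-φ N) (0:ℝ),
        gg a VR VF (-(2 * nI) - 2 * φ 1 * σ 1) * (w / K w))
        = gg a VR VF (-(2 * nI) - 2 * φ 1 * σ 1) * N ^ 2 := by
      rw [integral_const_mul, ← hG N hN]
    linarith
  -- the two endpoints
  set Zmin := gg a VR VF (2 * nI) with hZminDef
  set Zstar := gg a VR VF (-(2 * nI) - 2 * φ 1 * σ 1) with hZstarDef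
  have hZminpos : 0 < Zmin := gg_pos ha hV _
  have hZstarpos : 0 < Zstar := gg_pos ha hV _
  clear_value Zmin Zstar
  set N₁ : ℝ := min 1 (a / (2 * Zstar)) with hN₁def
  have hN₁pos : 0 < N₁ := lt_min one_pos (by positivity)
  have hN₁le1 : N₁ ≤ 1 := min_le_left _ _
  set N₂ : ℝ := N₁ + a / Zmin + 1 with hN₂def
  have hN₁₂ : N₁ < N₂ := by
    have : 0 < a / Zmin := by positivity
    rw [hN₂def]; linarith
  have hN₂pos : 0 < N₂ := lt_trans hN₁pos hN₁₂
  clear_value N₁ N₂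
  have hF1 : (∫ w in Set.Ioc (-φ N₁) (0:ℝ), (w / K w) * Zfun a VR VF I σ w N₁)
      < a * N₁ := by
    have h1 := hΦ_ub N₁ hN₁pos.le hN₁le1
    have h2 : Zstar * N₁ ≤ a / 2 := by
      have hle : N₁ ≤ a / (2 * Zstar) := hN₁def ▸ min_le_right 1 (a / (2 * Zstar))
      calc Zstar * N₁ ≤ Zstar * (a / (2 * Zstar)) := by gcongr
      _ = a / 2 := by field_simp
    nlinarith [hN₁pos]
  have hF2 : a * N₂
      < ∫ w in Set.Ioc (-φ N₂) (0:ℝ), (w / K w) * Zfun a VR VF I σ w N₂ := by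
    have h1 := hΦ_lb N₂ hN₂pos.le
    have h2 : a < Zmin * N₂ := by
      have : Zmin * (a / Zmin) = a := by field_simp
      have h3 : 0 < Zmin * N₁ := by positivity
      rw [hN₂def]; nlinarith
    nlinarith [mul_pos (by linarith : (0:ℝ) < Zmin * N₂ - a) hN₂pos, h1]
  -- continuity of φ on [N₁, N₂]
  have hφcont : ContinuousOn φ (Set.Icc N₁ N₂) := by
    set c0 := Real.sqrt (2 * Km) * N₁ with hc0def
    have hsq : 0 < Real.sqrt (2 * Km) := Real.sqrt_pos.mpr (by positivity)
    clear_value c0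
    have hc0 : 0 < c0 := by rw [hc0def]; positivity
    have hlow : ∀ x ∈ Set.Icc N₁ N₂, c0 ≤ φ x := by
      intro x hx
      calc c0 ≤ Real.sqrt (2 * Km) * x := by
            rw [hc0def]; exact mul_le_mul_of_nonneg_left hx.1 hsq.le
      _ ≤ φ x := hφ_lb x (by linarith [hx.1, hN₁pos])
    set C := KM * (2 * N₂) / c0 with hCdef
    clear_value C
    have hC : 0 < C := by rw [hCdef]; positivity
    have key : ∀ x ∈ Set.Icc N₁ N₂, ∀ y ∈ Set.Icc N₁ N₂, x ≤ y →
        φ y - φ x ≤ C * (y - x) := by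
      intro x hx y hy hxy
      have hx0 : 0 < x := lt_of_lt_of_le hN₁pos hx.1
      have hy0 : 0 < y := lt_of_lt_of_le hN₁pos hy.1
      have hφxy : φ x ≤ φ y := hφmono x y hx0.le hxy hy0
      have hsplit := G_split hKcont hKm hKbd (hφ0 x hx0.le) hφxy
      have hlow2 := G_diff_lower hKcont hKm hKmM hKneg hKbd (hφ0 x hx0.le) hφxy
      have e1 := hG x hx0.le
      have e2 := hG y hy0.le
      have h1 : φ x * (φ y - φ x) / KM ≤ y ^ 2 - x ^ 2 := by
        rw [e1, e2, hsplit]; linarith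
      have h2 : c0 * (φ y - φ x) ≤ KM * (y ^ 2 - x ^ 2) := by
        have h3 : φ x * (φ y - φ x) ≤ KM * (y ^ 2 - x ^ 2) := by
          rw [div_le_iff₀ hKM] at h1; linarith
        nlinarith [hlow x hx]
      have h4 : y ^ 2 - x ^ 2 ≤ 2 * N₂ * (y - x) := by nlinarith [hx.1, hy.2]
      rw [hCdef, div_mul_eq_mul_div, le_div_iff₀ hc0]
      nlinarith [mul_le_mul_of_nonneg_left h4 hKM.le]
    apply LipschitzOnWith.continuousOn (K := Real.toNNReal C)
    apply LipschitzOnWith.of_dist_le_mul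
    intro x hx y hy
    rw [Real.dist_eq, Real.dist_eq, Real.coe_toNNReal C hC.le]
    rcases le_total x y with hxy | hxy
    · rw [abs_sub_comm, abs_of_nonneg (by
        linarith [hφmono x y (by linarith [hx.1, hN₁pos]) hxy
          (lt_of_lt_of_le hN₁pos hy.1)] : (0:ℝ) ≤ φ y - φ x),
        abs_sub_comm, abs_of_nonneg (by linarith : (0:ℝ) ≤ y - x)]
      exact key x hx y hy hxy
    · rw [abs_of_nonneg (by
        linarith [hφmono y x (by linarith [hy.1, hN₁pos]) hxy
          (lt_of_lt_of_le hN₁pos hx.1)] : (0:ℝ) ≤ φ x - φ y),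
        abs_of_nonneg (by linarith : (0:ℝ) ≤ x - y)]
      exact key y hy x hx hxy
  -- continuity of Φ on [N₁, N₂]
  set B := φ N₂ with hBdef
  have hB0 : 0 ≤ B := hφ0 N₂ hN₂pos.le
  have hBN : ∀ N ∈ Set.Icc N₁ N₂, φ N ≤ B := by
    intro N hN
    exact hφmono N N₂ (by linarith [hN.1, hN₁pos]) hN.2 hN₂pos
  have hrw : ∀ N ∈ Set.Icc N₁ N₂,
      (∫ w in Set.Ioc (-φ N) (0:ℝ), (w / K w) * Zfun a VR VF I σ w N)
      = ∫ w in Set.Ioc (-B) (0:ℝ),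
          (Set.Ioc (-φ N) (0:ℝ)).indicator
            (fun w => (w / K w) * Zfun a VR VF I σ w N) w := by
    intro N hN
    rw [setIntegral_indicator measurableSet_Ioc]
    congr 1
    rw [Set.Ioc_inter_Ioc, max_eq_right (neg_le_neg (hBN N hN)), min_self]
  have hΦcont : ContinuousOn
      (fun N => ∫ w in Set.Ioc (-φ N) (0:ℝ), (w / K w) * Zfun a VR VF I σ w N)
      (Set.Icc N₁ N₂) := by
    intro N₀ hN₀
    have hφten : Tendsto φ (nhdsWithin N₀ (Set.Icc N₁ N₂)) (nhds (φ N₀)) := hφcont N₀ hN₀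
    have key : Tendsto
        (fun N => ∫ w in Set.Ioc (-B) (0:ℝ),
          (Set.Ioc (-φ N) (0:ℝ)).indicator
            (fun w => (w / K w) * Zfun a VR VF I σ w N) w)
        (nhdsWithin N₀ (Set.Icc N₁ N₂))
        (nhds (∫ w in Set.Ioc (-B) (0:ℝ),
          (Set.Ioc (-φ N₀) (0:ℝ)).indicator
            (fun w => (w / K w) * Zfun a VR VF I σ w N₀) w)) := by
      apply tendsto_integral_filter_of_dominated_convergence
        (bound := fun _ => (B / Km) * gg a VR VF (-(2 * nI) - 2 * B * σ N₂))
      · apply Eventually.of_forall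
        intro N
        exact (((q_asm hKcont le_rfl).mul
          (hZmeas N).aestronglyMeasurable).indicator measurableSet_Ioc)
      · apply eventually_mem_nhdsWithin.mono
        intro N hN
        have h1 : volume.restrict (Set.Ioc (-B) (0:ℝ))
            = volume.restrict (Set.Ioo (-B) 0) :=
          (Measure.restrict_congr_set Ioo_ae_eq_Ioc).symm
        rw [h1]
        filter_upwards [ae_restrict_mem measurableSet_Ioo] with w hw
        by_cases hmem : w ∈ Set.Ioc (-φ N) (0:ℝ)
        · rw [Set.indicator_of_mem hmem, Real.norm_eq_abs, abs_mul]
          apply mul_le_mul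
          · rw [abs_div]
            apply div_le_div₀ (by positivity) _ hKm (hKbd w hw.2).1
            rw [abs_of_neg hw.2]; linarith [hw.1]
          · rw [abs_of_nonneg (hZ_nonneg w N)]
            apply hZ_ub w N B (σ N₂) hw.1.le hw.2.le
              (hσmono (Set.mem_Ici.mpr (by linarith [hN.1, hN₁pos]))
                (Set.mem_Ici.mpr hN₂pos.le) hN.2)
              (hσ0 N (by linarith [hN.1, hN₁pos])) hB0
          · exact abs_nonneg _
          · positivity
        · rw [Set.indicator_of_notMem hmem]
          simp only [norm_zero]
          exact mul_nonneg (by positivity) (gg_pos ha hV _).le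
      · exact integrableOn_const measure_Ioc_lt_top.ne
      · have hzero : ∀ᵐ w ∂(volume.restrict (Set.Ioc (-B) (0:ℝ))), w ≠ -φ N₀ := by
          apply Filter.Eventually.filter_mono (ae_mono Measure.restrict_le_self)
          rw [ae_iff]
          have : {w : ℝ | ¬w ≠ -φ N₀} = {-φ N₀} := by ext x; simp
          rw [this]
          exact measure_singleton _
        filter_upwards [hzero, ae_restrict_mem measurableSet_Ioc] with w hw hwmem
        rcases lt_or_gt_of_ne hw with hlt | hgt
        · -- w < -φ N₀ : indicator eventually 0
          have hev : ∀ᶠ N in nhdsWithin N₀ (Set.Icc N₁ N₂),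
              (Set.Ioc (-φ N) (0:ℝ)).indicator
                (fun w => (w / K w) * Zfun a VR VF I σ w N) w = 0 := by
            filter_upwards [(tendsto_order.1 hφten).2 (-w) (by linarith)] with N hN
            apply Set.indicator_of_notMem
            intro hmem
            linarith [hmem.1]
          have h0 : (Set.Ioc (-φ N₀) (0:ℝ)).indicator
              (fun w => (w / K w) * Zfun a VR VF I σ w N₀) w = 0 :=
            Set.indicator_of_notMem (fun hmem => absurd hmem.1 (by linarith)) _
          rw [h0]
          exact (tendsto_congr' hev).mpr tendsto_const_nhds
        · -- -φ N₀ < w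
          have hev : ∀ᶠ N in nhdsWithin N₀ (Set.Icc N₁ N₂),
              (Set.Ioc (-φ N) (0:ℝ)).indicator
                (fun w => (w / K w) * Zfun a VR VF I σ w N) w
              = (w / K w) * Zfun a VR VF I σ w N := by
            filter_upwards [(tendsto_order.1 hφten).1 (-w) (by linarith)] with N hN
            exact Set.indicator_of_mem (Set.mem_Ioc.mpr ⟨by linarith, hwmem.2⟩) _
          rw [Set.indicator_of_mem (Set.mem_Ioc.mpr ⟨hgt, hwmem.2⟩)]
          apply (tendsto_congr' hev).mpr
          exact (tendsto_const_nhds.mul ((hZcontN w).tendsto N₀)).mono_left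
            nhdsWithin_le_nhds
    have heq : ∀ᶠ N in nhdsWithin N₀ (Set.Icc N₁ N₂),
        (∫ w in Set.Ioc (-B) (0:ℝ),
          (Set.Ioc (-φ N) (0:ℝ)).indicator
            (fun w => (w / K w) * Zfun a VR VF I σ w N) w)
        = ∫ w in Set.Ioc (-φ N) (0:ℝ), (w / K w) * Zfun a VR VF I σ w N := by
      apply eventually_mem_nhdsWithin.mono
      intro N hN
      exact (hrw N hN).symm
    have hT := (tendsto_congr' heq).mp key
    show Tendsto _ (nhdsWithin N₀ (Set.Icc N₁ N₂))
      (nhds (∫ w in Set.Ioc (-φ N₀) (0:ℝ), (w / K w) * Zfun a VR VF I σ w N₀))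
    rw [hrw N₀ hN₀]
    exact hT
  -- intermediate value theorem
  have hcontF : ContinuousOn
      (fun N => (∫ w in Set.Ioc (-φ N) (0:ℝ), (w / K w) * Zfun a VR VF I σ w N) - a * N)
      (Set.Icc N₁ N₂) :=
    hΦcont.sub ((continuous_const.mul continuous_id).continuousOn)
  have hmem : (0:ℝ) ∈ Set.Icc
      ((∫ w in Set.Ioc (-φ N₁) (0:ℝ), (w / K w) * Zfun a VR VF I σ w N₁) - a * N₁)
      ((∫ w in Set.Ioc (-φ N₂) (0:ℝ), (w / K w) * Zfun a VR VF I σ w N₂) - a * N₂) :=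
    ⟨by linarith, by linarith⟩
  obtain ⟨N, hNmem, hNeq⟩ := intermediate_value_Icc hN₁₂.le hcontF hmem
  refine ⟨N, lt_of_lt_of_le hN₁pos hNmem.1, by linarith [hNeq]⟩
end

section
/- Uniqueness of the inhibitory steady state under the learning rule (Proposition 6.2, uniqueness part): in the case σ(N) = N, assume I : ℝ → ℝ is bounded, differentiable with I'(w) ≥ 0 for all w, and let K : (−∞,0) → ℝ be continuous with K(w) < 0 and K_m ≤ |K(w)| ≤ K_M for all w < 0 (0 < K_m ≤ K_M). For N̄ ≥ 0 let φ(N̄) ≥ 0 be the unique number with N̄² = ∫_{−φ(N̄)}^{0} (w/K(w)) dw, and define Φ(N̄) = ∫_{−φ(N̄)}^{0} (w/K(w)) · Z_{N̄,I}(w) dw, where Z is taken with σ(N̄) = N̄. Then there is at most one N̄ > 0 such that Φ(N̄) = a N̄. -/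
open MeasureTheory Real Set Filter

namespace Stmt19Aux

/-- Inner integral of the partition function, as a function of the shift `c`. -/
noncomputable def Fc (a VR VF c v : ℝ) : ℝ :=
  ∫ v' in Set.Icc (max VR v) VF, Real.exp ((v' - v) * (v' + v - 2 * c) / (2 * a))

/-- The partition function as a function of the shift `c = I w + w σ(N)`. -/
noncomputable def Gc (a VR VF c : ℝ) : ℝ := ∫ v in Set.Iic VF, Fc a VR VF c v

lemma Zfun_eq (a VR VF : ℝ) (I : ℝ → ℝ) (w N : ℝ) :
    Zfun a VR VF I (fun x => x) w N = Gc a VR VF (I w + w * N) := by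
  simp only [Zfun, Gc, Fc, mul_add, ← sub_sub, ← mul_assoc]

lemma Fc_nonneg (a VR VF c v : ℝ) : 0 ≤ Fc a VR VF c v :=
  setIntegral_nonneg measurableSet_Icc fun _ _ => (Real.exp_pos _).le

lemma Fc_anti (a VR VF : ℝ) (ha : 0 < a) (v : ℝ) {c c' : ℝ} (h : c ≤ c') :
    Fc a VR VF c' v ≤ Fc a VR VF c v := by
  apply setIntegral_mono_on
  · exact (Real.continuous_exp.comp (by continuity)).integrableOn_Icc
  · exact (Real.continuous_exp.comp (by continuity)).integrableOn_Icc
  · exact measurableSet_Icc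
  · intro v' hv'
    have hv : v ≤ v' := le_trans (le_max_right VR v) hv'.1
    have h2a : (0:ℝ) < 2 * a := by linarith
    apply Real.exp_le_exp.2
    apply (div_le_div_iff_of_pos_right h2a).2
    nlinarith

lemma Fc_stronglyMeasurable (a VR VF c : ℝ) : StronglyMeasurable (Fc a VR VF c) := by
  have key : ∀ v, Fc a VR VF c v
      = ∫ v' in Set.Icc VR VF, (Set.Ici v).indicator
          (fun v' => Real.exp ((v' - v) * (v' + v - 2 * c) / (2 * a))) v' := by
    intro v
    rw [setIntegral_indicator measurableSet_Ici]
    have : Icc VR VF ∩ Ici v = Icc (max VR v) VF := by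
      ext x; simp [Set.mem_Icc, max_le_iff]; tauto
    rw [this]; rfl
  have : StronglyMeasurable (fun v => ∫ v' in Set.Icc VR VF,
      (Set.Ici v).indicator (fun v' => Real.exp ((v' - v) * (v' + v - 2 * c) / (2 * a))) v') := by
    apply MeasureTheory.StronglyMeasurable.integral_prod_right
      (f := fun v v' => (Set.Ici v).indicator
        (fun v' => Real.exp ((v' - v) * (v' + v - 2 * c) / (2 * a))) v')
    apply Measurable.stronglyMeasurable
    have hset : MeasurableSet {p : ℝ × ℝ | p.1 ≤ p.2} :=
      measurableSet_le measurable_fst measurable_snd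
    have hexp : Measurable (fun p : ℝ × ℝ =>
        Real.exp ((p.2 - p.1) * (p.2 + p.1 - 2 * c) / (2 * a))) := by measurability
    have huncurry : (Function.uncurry fun v v' => (Set.Ici v).indicator
        (fun v' => Real.exp ((v' - v) * (v' + v - 2 * c) / (2 * a))) v')
        = Set.indicator {p : ℝ × ℝ | p.1 ≤ p.2}
          (fun p => Real.exp ((p.2 - p.1) * (p.2 + p.1 - 2 * c) / (2 * a))) := by
      ext p
      by_cases hp : p.1 ≤ p.2 <;>
        simp [Function.uncurry, Set.indicator, hp, Set.mem_Ici]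
    rw [huncurry]
    exact hexp.indicator hset
  simpa [← key] using this

lemma Fc_bound (a VR VF c : ℝ) (ha : 0 < a) (hV : VR < VF) {v : ℝ} (hv : v ≤ VF) :
    Fc a VR VF c v ≤ (VF - VR) * Real.exp ((max (|VR - c|) (|VF - c|))^2 / (2*a))
      * Real.exp (-(1/(2*a)) * (v - c)^2) := by
  set r := max (|VR - c|) (|VF - c|) with hr
  have h2a : (0:ℝ) < 2 * a := by linarith
  set C := Real.exp (r^2 / (2*a)) * Real.exp (-(1/(2*a)) * (v - c)^2) with hC
  have hbd : ∀ v' ∈ Icc (max VR v) VF,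
      Real.exp ((v' - v) * (v' + v - 2 * c) / (2 * a)) ≤ C := by
    intro v' hv'
    rw [hC, ← Real.exp_add]
    apply Real.exp_le_exp.2
    have h1 : VR ≤ v' := le_trans (le_max_left _ _) hv'.1
    have h2 : v' ≤ VF := hv'.2
    have habs : |v' - c| ≤ r := by
      rw [abs_le]
      refine ⟨?_, ?_⟩
      · have h3 := neg_abs_le (VR - c)
        have h4 := le_max_left (|VR - c|) (|VF - c|)
        rw [hr]; linarith
      · have h3 := le_abs_self (VF - c)
        have h4 := le_max_right (|VR - c|) (|VF - c|)
        rw [hr]; linarith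
    have hsq : (v' - c)^2 ≤ r^2 := by
      have := abs_nonneg (v' - c)
      nlinarith [sq_abs (v' - c)]
    have heq : r^2 / (2*a) + -(1/(2*a)) * (v - c)^2 = (r^2 - (v-c)^2) / (2*a) := by
      field_simp; ring
    rw [heq, div_le_div_iff_of_pos_right h2a]
    nlinarith
  calc Fc a VR VF c v ≤ ∫ _ in Icc (max VR v) VF, C := by
        apply setIntegral_mono_on
        · exact (Real.continuous_exp.comp (by continuity)).integrableOn_Icc
        · exact integrableOn_const measure_Icc_lt_top.ne
        · exact measurableSet_Icc
        · exact hbd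
    _ = (VF - max VR v) * C := by
        rw [setIntegral_const, Real.volume_real_Icc, smul_eq_mul,
          max_eq_left (by simp [sub_nonneg, max_le_iff]; exact ⟨hV.le, hv⟩)]
    _ ≤ (VF - VR) * C := by
        have hCpos : 0 ≤ C := by positivity
        have : VR ≤ max VR v := le_max_left _ _
        nlinarith
    _ = _ := by rw [hC]; ring

lemma Fc_integrableOn (a VR VF c : ℝ) (ha : 0 < a) (hV : VR < VF) :
    IntegrableOn (Fc a VR VF c) (Set.Iic VF) := by
  have h2a : (0:ℝ) < 1 / (2*a) := by positivity
  have hg : Integrable (fun v => (VF - VR) * Real.exp ((max (|VR - c|) (|VF - c|))^2 / (2*a))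
      * Real.exp (-(1/(2*a)) * (v - c)^2)) :=
    ((integrable_exp_neg_mul_sq h2a).comp_sub_right c).const_mul _
  apply Integrable.mono' hg.integrableOn
    ((Fc_stronglyMeasurable a VR VF c).aestronglyMeasurable.restrict)
  refine (ae_restrict_iff' measurableSet_Iic).2 (ae_of_all _ fun v hv => ?_)
  rw [Real.norm_eq_abs, abs_of_nonneg (Fc_nonneg a VR VF c v)]
  exact Fc_bound a VR VF c ha hV hv

lemma Gc_nonneg (a VR VF c : ℝ) : 0 ≤ Gc a VR VF c :=
  setIntegral_nonneg measurableSet_Iic fun v _ => Fc_nonneg a VR VF c v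

lemma Gc_anti (a VR VF : ℝ) (ha : 0 < a) (hV : VR < VF) : Antitone (Gc a VR VF) := by
  intro c c' h
  apply setIntegral_mono_on (Fc_integrableOn a VR VF c' ha hV)
    (Fc_integrableOn a VR VF c ha hV) measurableSet_Iic
  exact fun v _ => Fc_anti a VR VF ha v h

/-- Key monotonicity argument: no two distinct positive solutions. -/
lemma key (a VR VF : ℝ) (ha : 0 < a) (hV : VR < VF)
    (I : ℝ → ℝ) (hIdiff : Differentiable ℝ I) (hI' : ∀ w, 0 ≤ deriv I w)
    (K : ℝ → ℝ) (hKcont : ContinuousOn K (Set.Iio 0))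
    (hKneg : ∀ w : ℝ, w < 0 → K w < 0)
    (Km : ℝ) (hKm : 0 < Km)
    (hKbd : ∀ w : ℝ, w < 0 → Km ≤ |K w|)
    (φ : ℝ → ℝ)
    (hφ : ∀ N : ℝ, 0 ≤ N →
      0 ≤ φ N ∧ N ^ 2 = ∫ w in Set.Ioc (-φ N) (0 : ℝ), w / K w)
    (N₁ N₂ : ℝ) (h1 : 0 < N₁) (h12 : N₁ < N₂)
    (e₁ : (∫ w in Set.Ioc (-φ N₁) (0:ℝ),
      (w / K w) * Zfun a VR VF I (fun x => x) w N₁) = a * N₁)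
    (e₂ : (∫ w in Set.Ioc (-φ N₂) (0:ℝ),
      (w / K w) * Zfun a VR VF I (fun x => x) w N₂) = a * N₂) :
    False := by
  have h2 : 0 < N₂ := h1.trans h12
  obtain ⟨hφ1pos, hS1⟩ := hφ N₁ h1.le
  obtain ⟨hφ2pos, hS2⟩ := hφ N₂ h2.le
  simp only [Zfun_eq a VR VF I] at e₁ e₂
  set ρ : ℝ → ℝ := fun w => w / K w with hρdef
  -- basic properties of the shift c(w) = I w + w N and of Z N w = Gc(c(w))
  have hccont : ∀ N : ℝ, Continuous (fun w => I w + w * N) :=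
    fun N => hIdiff.continuous.add (continuous_id.mul continuous_const)
  have hcmono : ∀ N : ℝ, 0 ≤ N → Monotone (fun w => I w + w * N) := by
    intro N hN
    apply monotone_of_deriv_nonneg (hIdiff.add (differentiable_id.mul_const N))
    intro w
    have hd : HasDerivAt (fun w => I w + w * N) (deriv I w + 1 * N) w :=
      ((hIdiff w).hasDerivAt).add ((hasDerivAt_id w).mul_const N)
    rw [show (I + fun y => id y * N) = (fun w => I w + w * N) from rfl, hd.deriv]
    have := hI' w
    linarith
  have hGanti := Gc_anti a VR VF ha hV
  have hZanti : ∀ N : ℝ, 0 ≤ N → Antitone (fun w => Gc a VR VF (I w + w * N)) :=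
    fun N hN w w' hww => hGanti (hcmono N hN hww)
  have hZmeas : ∀ N : ℝ, Measurable (fun w => Gc a VR VF (I w + w * N)) :=
    fun N => hGanti.measurable.comp (hccont N).measurable
  -- measurability and size of ρ
  have hρmeas : ∀ α β : ℝ, β ≤ 0 → AEMeasurable ρ (volume.restrict (Ioc α β)) := by
    intro α β hβ
    have hK : AEMeasurable ρ (volume.restrict (Iio 0)) :=
      measurable_id.aemeasurable.div (hKcont.aemeasurable measurableSet_Iio)
    have hres : volume.restrict (Ioc α β) = volume.restrict (Ioo α β) :=
      (Measure.restrict_congr_set MeasureTheory.Ioo_ae_eq_Ioc).symm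
    rw [hres]
    exact hK.mono_measure
      (Measure.restrict_mono (fun x hx => lt_of_lt_of_le hx.2 hβ) le_rfl)
  have hρnonneg : ∀ w : ℝ, w ≤ 0 → 0 ≤ ρ w := by
    intro w hw
    rcases eq_or_lt_of_le hw with rfl | h
    · simp [hρdef]
    · show 0 ≤ w / K w
      rw [← neg_div_neg_eq]
      exact div_nonneg (by linarith) (by linarith [hKneg w h])
  have hρabs : ∀ α w : ℝ, α ≤ 0 → α ≤ w → w ≤ 0 → |ρ w| ≤ -α / Km := by
    intro α w hα hw1 hw2
    rcases eq_or_lt_of_le hw2 with rfl | h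
    · show |(0:ℝ) / K 0| ≤ -α / Km
      simp only [zero_div, abs_zero]
      exact div_nonneg (by linarith) hKm.le
    · show |w / K w| ≤ -α / Km
      rw [abs_div]
      exact div_le_div₀ (by linarith) (by rw [abs_of_neg h]; linarith) hKm (hKbd w h)
  -- the integrability helper
  have hint : ∀ (α β : ℝ), β ≤ 0 → ∀ (f : ℝ → ℝ),
      AEMeasurable f (volume.restrict (Ioc α β)) → ∀ C : ℝ,
      (∀ w ∈ Ioc α β, |ρ w * f w| ≤ C) →
      IntegrableOn (fun w => ρ w * f w) (Ioc α β) := by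
    intro α β hβ f hf C hC
    apply Integrable.mono' (g := fun _ => C)
      (integrableOn_const measure_Ioc_lt_top.ne)
      ((hρmeas α β hβ).mul hf).aestronglyMeasurable
    exact (ae_restrict_iff' measurableSet_Ioc).2
      (ae_of_all _ fun w hw => by rw [Real.norm_eq_abs]; exact hC w hw)
  have hρint : ∀ α : ℝ, α ≤ 0 → IntegrableOn ρ (Ioc α 0) := by
    intro α hα
    have := hint α 0 le_rfl (fun _ => 1) aemeasurable_const (-α / Km)
      (fun w hw => by
        rw [mul_one]; exact hρabs α w hα hw.1.le hw.2)
    simpa using this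
  -- φ N₁ ≤ φ N₂
  have hφle : φ N₁ ≤ φ N₂ := by
    by_contra hcon
    push_neg at hcon
    have hsub : Ioc (-φ N₂) (0:ℝ) ⊆ Ioc (-φ N₁) 0 := Ioc_subset_Ioc (by linarith) le_rfl
    have hmono : N₂^2 ≤ N₁^2 := by
      rw [hS1, hS2]
      exact setIntegral_mono_set (hρint _ (by linarith))
        ((ae_restrict_iff' measurableSet_Ioc).2
          (ae_of_all _ fun w hw => hρnonneg w hw.2))
        (HasSubset.Subset.eventuallyLE hsub)
    nlinarith
  -- notation for the three intervals
  have hα1 : -φ N₁ ≤ (0:ℝ) := by linarith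
  have hα2 : -φ N₂ ≤ (0:ℝ) := by linarith
  have h21 : -φ N₂ ≤ -φ N₁ := by linarith
  -- bounds for Z on intervals
  have hZbd : ∀ N : ℝ, 0 ≤ N → ∀ α w : ℝ, α ≤ w → w ≤ 0 →
      |Gc a VR VF (I w + w * N)| ≤ Gc a VR VF (I α + α * N) := by
    intro N hN α w hw1 hw2
    rw [abs_of_nonneg (Gc_nonneg a VR VF _)]
    exact hZanti N hN hw1
  -- integrability of the various integrands
  have intZ : ∀ N : ℝ, 0 ≤ N → ∀ α β : ℝ, α ≤ 0 → β ≤ 0 →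
      IntegrableOn (fun w => ρ w * Gc a VR VF (I w + w * N)) (Ioc α β) := by
    intro N hN α β hα hβ
    apply hint α β hβ _ (hZmeas N).aemeasurable.restrict
      ((-α / Km) * Gc a VR VF (I α + α * N))
    intro w hw
    rw [abs_mul]
    exact mul_le_mul (hρabs α w hα hw.1.le (hw.2.trans hβ))
      (hZbd N hN α w hw.1.le (hw.2.trans hβ)) (abs_nonneg _)
      (div_nonneg (by linarith) hKm.le)
  have intρm : ∀ (m : ℝ) (α β : ℝ), α ≤ 0 → β ≤ 0 →
      IntegrableOn (fun w => ρ w * m) (Ioc α β) := by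
    intro m α β hα hβ
    apply hint α β hβ _ aemeasurable_const ((-α / Km) * |m|)
    intro w hw
    rw [abs_mul]
    exact mul_le_mul_of_nonneg_right
      (hρabs α w hα hw.1.le (hw.2.trans hβ)) (abs_nonneg m)
  -- split the integral over (-φ N₂, 0] at -φ N₁
  have hunion : Ioc (-φ N₂) (0:ℝ) = Ioc (-φ N₂) (-φ N₁) ∪ Ioc (-φ N₁) 0 :=
    (Ioc_union_Ioc_eq_Ioc h21 hα1).symm
  rw [hunion, setIntegral_union (Ioc_disjoint_Ioc_of_le le_rfl) measurableSet_Ioc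
    (intZ N₂ h2.le _ _ hα2 hα1) (intZ N₂ h2.le _ _ hα1 le_rfl)] at e₂
  have hSsplit : N₂^2 = (∫ w in Ioc (-φ N₂) (-φ N₁), ρ w) + N₁^2 := by
    rw [hS2, hunion, setIntegral_union (Ioc_disjoint_Ioc_of_le le_rfl) measurableSet_Ioc
      ((hρint _ hα2).mono_set (Ioc_subset_Ioc le_rfl hα1)) (hρint _ hα1), hS1]
  -- the pivot value m
  set m : ℝ := Gc a VR VF (I (-φ N₁) + (-φ N₁) * N₂) with hm
  -- middle piece is at least m * (N₂² - N₁²)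
  have hmid : (∫ w in Ioc (-φ N₂) (-φ N₁), ρ w) * m
      ≤ ∫ w in Ioc (-φ N₂) (-φ N₁), ρ w * Gc a VR VF (I w + w * N₂) := by
    rw [← integral_mul_const]
    apply setIntegral_mono_on (intρm m _ _ hα2 hα1)
      (intZ N₂ h2.le _ _ hα2 hα1) measurableSet_Ioc
    intro w hw
    exact mul_le_mul_of_nonneg_left (hZanti N₂ h2.le hw.2) (hρnonneg w (hw.2.trans hα1))
  -- last piece is at most m * N₁²
  have hA1le : (∫ w in Ioc (-φ N₁) (0:ℝ), ρ w * Gc a VR VF (I w + w * N₂))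
      ≤ N₁^2 * m := by
    have : (∫ w in Ioc (-φ N₁) (0:ℝ), ρ w * m) = N₁^2 * m := by
      rw [integral_mul_const, ← hS1]
    rw [← this]
    apply setIntegral_mono_on (intZ N₂ h2.le _ _ hα1 le_rfl)
      (intρm m _ _ hα1 le_rfl) measurableSet_Ioc
    intro w hw
    exact mul_le_mul_of_nonneg_left (hZanti N₂ h2.le hw.1.le) (hρnonneg w hw.2)
  -- last piece is at least a * N₁
  have hA1ge : a * N₁ ≤ ∫ w in Ioc (-φ N₁) (0:ℝ), ρ w * Gc a VR VF (I w + w * N₂) := by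
    rw [← e₁]
    apply setIntegral_mono_on (intZ N₁ h1.le _ _ hα1 le_rfl)
      (intZ N₂ h2.le _ _ hα1 le_rfl) measurableSet_Ioc
    intro w hw
    have hc : I w + w * N₂ ≤ I w + w * N₁ := by nlinarith [hw.2]
    exact mul_le_mul_of_nonneg_left (hGanti hc) (hρnonneg w hw.2)
  -- final contradiction
  set Amid := ∫ w in Ioc (-φ N₂) (-φ N₁), ρ w * Gc a VR VF (I w + w * N₂) with hAmid
  set A₁ := ∫ w in Ioc (-φ N₁) (0:ℝ), ρ w * Gc a VR VF (I w + w * N₂) with hA₁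
  set Smid := ∫ w in Ioc (-φ N₂) (-φ N₁), ρ w with hSmid
  have hSm : Smid = N₂^2 - N₁^2 := by linarith
  rw [hSm] at hmid
  have f1 : (N₂^2 - N₁^2) * m + A₁ ≤ a * N₂ := by linarith
  have hauxsq : N₁^2 ≤ N₂^2 := by nlinarith
  have h_a := mul_le_mul_of_nonneg_right f1 (sq_nonneg N₁)
  have h_b := mul_nonneg (sub_nonneg.2 hA1le) (sub_nonneg.2 hauxsq)
  have h_c := mul_le_mul_of_nonneg_right hA1ge (sq_nonneg N₂)
  have key1 : a * N₁ * N₂^2 ≤ a * N₂ * N₁^2 := by nlinarith [h_a, h_b, h_c]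
  nlinarith [key1, mul_pos (mul_pos ha (mul_pos h1 h2)) (sub_pos.2 h12)]

end Stmt19Aux

/-- Uniqueness of the inhibitory steady state under the learning rule
(Proposition 6.2, uniqueness part), in the case `σ(N) = N` and `I' ≥ 0`. -/
theorem stmt19 (a VR VF : ℝ) (ha : 0 < a) (hV : VR < VF)
    (I : ℝ → ℝ) (hIdiff : Differentiable ℝ I) (hI' : ∀ w, 0 ≤ deriv I w)
    (nI : ℝ) (hI : ∀ x, |I x| ≤ nI)
    (K : ℝ → ℝ) (hKcont : ContinuousOn K (Set.Iio 0))
    (hKneg : ∀ w : ℝ, w < 0 → K w < 0)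
    (Km KM : ℝ) (hKm : 0 < Km) (hKmM : Km ≤ KM)
    (hKbd : ∀ w : ℝ, w < 0 → Km ≤ |K w| ∧ |K w| ≤ KM)
    (φ : ℝ → ℝ)
    (hφ : ∀ N : ℝ, 0 ≤ N →
      0 ≤ φ N ∧ N ^ 2 = ∫ w in Set.Ioc (-φ N) (0 : ℝ), w / K w) :
    ∀ N₁ N₂ : ℝ, 0 < N₁ → 0 < N₂ →
      (∫ w in Set.Ioc (-φ N₁) (0 : ℝ),
        (w / K w) * Zfun a VR VF I (fun x => x) w N₁) = a * N₁ →
      (∫ w in Set.Ioc (-φ N₂) (0 : ℝ),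
        (w / K w) * Zfun a VR VF I (fun x => x) w N₂) = a * N₂ →
      N₁ = N₂ := by
  intro N₁ N₂ h1 h2 e₁ e₂
  rcases lt_trichotomy N₁ N₂ with h | h | h
  · exact absurd (Stmt19Aux.key a VR VF ha hV I hIdiff hI' K hKcont hKneg Km hKm
      (fun w hw => (hKbd w hw).1) φ hφ N₁ N₂ h1 h e₁ e₂) not_false
  · exact h
  · exact absurd (Stmt19Aux.key a VR VF ha hV I hIdiff hI' K hKcont hKneg Km hKm
      (fun w hw => (hKbd w hw).1) φ hφ N₂ N₁ h2 h e₂ e₁) not_false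
end
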